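/- Radius of convergence lower bound: let K be a finite extension of ℚ₂, U, V ∈ K⟦t⟧ of t-adic valuation 1 with ‖U‖_r < ∞ and ‖V‖_s < ∞ for some positive reals r, s, and let z be the unique nonzero solution of U·(z')² = V∘z in t·K⟦t⟧. Then the radius of convergence of z is at least min( r·s²·|U'(0)|² / (‖U‖_r·‖V‖_s), r²·|U'(0)| / ‖U‖_r ). -/

import Mathlib

set_option maxHeartbeats 2000000

open PowerSeries

/-- Composition `V ∘ z` of formal power series, valid when `z` has zero constant term. -/
noncomputable def PowerSeries.compSeries {K : Type*} [NormedField K] (V z : PowerSeries K) :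
    PowerSeries K :=
  PowerSeries.mk fun n => ∑ k ∈ Finset.range (n + 1),
    (PowerSeries.coeff k V) * (PowerSeries.coeff n (z ^ k))

lemma na_sum_le {K : Type*} [NormedField K] (hna : IsNonarchimedean (norm : K → ℝ))
    {α : Type*} (s : Finset α) (f : α → K) {C : ℝ} (hC : 0 ≤ C)
    (h : ∀ i ∈ s, ‖f i‖ ≤ C) : ‖∑ i ∈ s, f i‖ ≤ C := by
  induction s using Finset.cons_induction with
  | empty => simpa
  | cons a s ha ih =>
    rw [Finset.sum_cons]
    exact le_trans (hna _ _) (max_le (h a (Finset.mem_cons_self _ _))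
      (ih fun i hi => h i (Finset.mem_cons_of_mem hi)))

lemma na_natCast_le_one {K : Type*} [NormedField K] (hna : IsNonarchimedean (norm : K → ℝ))
    (n : ℕ) : ‖(n : K)‖ ≤ 1 := by
  induction n with
  | zero => simp
  | succ k ih =>
    push_cast
    exact le_trans (hna _ _) (max_le ih (by simp))

lemma pow_coeff_bound {K : Type*} [NormedField K] (hna : IsNonarchimedean (norm : K → ℝ))
    (z : PowerSeries K) (hz0 : constantCoeff z = 0) (M : ℝ) (hM : 0 ≤ M) (n : ℕ)
    (Hlt : ∀ j < n, ‖coeff j z‖ ≤ ‖coeff 1 z‖ * M ^ (j - 1)) :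
    ∀ k m : ℕ, m + 1 ≤ n + k →
      ‖coeff m (z ^ (k + 1))‖ ≤ ‖coeff 1 z‖ ^ (k + 1) * M ^ (m - (k + 1)) := by
  have hz1 : (0:ℝ) ≤ ‖coeff 1 z‖ := norm_nonneg _
  intro k
  induction k with
  | zero =>
    intro m hm
    simpa using Hlt m (by omega)
  | succ k ih =>
    intro m hm
    have hC : (0:ℝ) ≤ ‖coeff 1 z‖ ^ (k + 2) * M ^ (m - (k + 2)) :=
      mul_nonneg (pow_nonneg hz1 _) (pow_nonneg hM _)
    rw [pow_succ, coeff_mul]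
    refine na_sum_le hna _ _ hC fun p hp => ?_
    rw [Finset.HasAntidiagonal.mem_antidiagonal] at hp
    by_cases hb0 : p.2 = 0
    · rw [hb0, coeff_zero_eq_constantCoeff, hz0]
      simpa using hC
    by_cases ha : p.1 < k + 1
    · rw [X_pow_dvd_iff.mp (pow_dvd_pow_of_dvd (X_dvd_iff.mpr hz0) (k+1)) p.1 ha]
      simpa using hC
    · push_neg at ha
      have h1 : ‖coeff p.1 (z ^ (k + 1))‖ ≤ ‖coeff 1 z‖ ^ (k + 1) * M ^ (p.1 - (k + 1)) :=
        ih p.1 (by omega)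
      have h2 : ‖coeff p.2 z‖ ≤ ‖coeff 1 z‖ * M ^ (p.2 - 1) := Hlt p.2 (by omega)
      rw [norm_mul]
      calc ‖coeff p.1 (z ^ (k + 1))‖ * ‖coeff p.2 z‖
          ≤ (‖coeff 1 z‖ ^ (k + 1) * M ^ (p.1 - (k + 1))) * (‖coeff 1 z‖ * M ^ (p.2 - 1)) :=
            mul_le_mul h1 h2 (norm_nonneg _) (by positivity)
        _ = ‖coeff 1 z‖ ^ (k + 2) * (M ^ (p.1 - (k + 1)) * M ^ (p.2 - 1)) := by ring
        _ = ‖coeff 1 z‖ ^ (k + 2) * M ^ (m - (k + 2)) := by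
            have e : p.1 - (k+1) + (p.2 - 1) = m - (k + 2) := by omega
            rw [← pow_add, e]

lemma dsq_coeff_bound {K : Type*} [NormedField K] (hna : IsNonarchimedean (norm : K → ℝ))
    (z : PowerSeries K) (M : ℝ) (hM : 0 ≤ M) (n : ℕ)
    (Hlt : ∀ j < n, ‖coeff j z‖ ≤ ‖coeff 1 z‖ * M ^ (j - 1)) :
    ∀ j : ℕ, j + 2 ≤ n → ‖coeff j ((d⁄dX K z) ^ 2)‖ ≤ ‖coeff 1 z‖ ^ 2 * M ^ j := by
  intro j hj
  have hC : (0:ℝ) ≤ ‖coeff 1 z‖ ^ 2 * M ^ j := by positivity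
  rw [sq, coeff_mul]
  refine na_sum_le hna _ _ hC fun p hp => ?_
  rw [Finset.HasAntidiagonal.mem_antidiagonal] at hp
  rw [coeff_derivative, coeff_derivative, norm_mul, norm_mul, norm_mul]
  have hn1 : ‖((p.1 : K) + 1)‖ ≤ 1 := by
    have := na_natCast_le_one hna (p.1 + 1); push_cast at this; exact this
  have hn2 : ‖((p.2 : K) + 1)‖ ≤ 1 := by
    have := na_natCast_le_one hna (p.2 + 1); push_cast at this; exact this
  have h1 : ‖coeff (p.1 + 1) z‖ ≤ ‖coeff 1 z‖ * M ^ p.1 := by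
    have := Hlt (p.1 + 1) (by omega); simpa using this
  have h2 : ‖coeff (p.2 + 1) z‖ ≤ ‖coeff 1 z‖ * M ^ p.2 := by
    have := Hlt (p.2 + 1) (by omega); simpa using this
  calc ‖coeff (p.1+1) z‖ * ‖((p.1:K)+1)‖ * (‖coeff (p.2+1) z‖ * ‖((p.2:K)+1)‖)
      ≤ (‖coeff 1 z‖ * M ^ p.1 * 1) * (‖coeff 1 z‖ * M ^ p.2 * 1) := by
        refine mul_le_mul ?_ ?_ (by positivity) (by positivity)
        · exact mul_le_mul h1 hn1 (norm_nonneg _) (by positivity)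
        · exact mul_le_mul h2 hn2 (norm_nonneg _) (by positivity)
    _ = ‖coeff 1 z‖ ^ 2 * (M ^ p.1 * M ^ p.2) := by ring
    _ = ‖coeff 1 z‖ ^ 2 * M ^ j := by rw [← pow_add, hp]

/-- Lower bound for the radius of convergence of the solution `z` of `U·(z')² = V ∘ z`:
for every `ρ` below `min(r s² |U'(0)|² / (‖U‖_r ‖V‖_s), r² |U'(0)| / ‖U‖_r)`, the
quantities `‖coeff n z‖ ρ^n` are bounded. -/
theorem radius_of_convergence_lower_bound
    {K : Type*} [NormedField K] [Algebra ℚ_[2] K] [FiniteDimensional ℚ_[2] K]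
    (hna : IsNonarchimedean (norm : K → ℝ)) (h2 : ‖(2 : K)‖ = 1 / 2)
    (r s : ℝ) (hr : 0 < r) (hs : 0 < s)
    (U V z : PowerSeries K)
    (hU0 : constantCoeff U = 0) (hU1 : coeff 1 U ≠ 0)
    (hV0 : constantCoeff V = 0) (hV1 : coeff 1 V ≠ 0)
    (NU NV : ℝ)
    (hNU : IsLUB (Set.range fun n : ℕ => ‖coeff n U‖ * r ^ n) NU)
    (hNV : IsLUB (Set.range fun n : ℕ => ‖coeff n V‖ * s ^ n) NV)
    (hz : z ≠ 0) (hz0 : constantCoeff z = 0)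
    (hsol : U * (d⁄dX K z) ^ 2 = V.compSeries z) :
    ∀ ρ : ℝ, 0 < ρ →
      ρ < min (r * s ^ 2 * ‖coeff 1 U‖ ^ 2 / (NU * NV))
              (r ^ 2 * ‖coeff 1 U‖ / NU) →
      ∃ B : ℝ, ∀ n : ℕ, ‖coeff n z‖ * ρ ^ n ≤ B := by
  classical
  intro ρ hρ hρm
  have hz0' : coeff 0 z = 0 := by rw [coeff_zero_eq_constantCoeff]; exact hz0
  have hu1pos : (0:ℝ) < ‖coeff 1 U‖ := norm_pos_iff.mpr hU1
  -- basic bounds from the LUBs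
  have hcU : ∀ n : ℕ, ‖coeff n U‖ * r ^ n ≤ NU := fun n => hNU.1 ⟨n, rfl⟩
  have hcV : ∀ n : ℕ, ‖coeff n V‖ * s ^ n ≤ NV := fun n => hNV.1 ⟨n, rfl⟩
  have hu1r : ‖coeff 1 U‖ * r ≤ NU := by simpa using hcU 1
  have hNUpos : (0:ℝ) < NU := lt_of_lt_of_le (by positivity) hu1r
  have hv1s : ‖coeff 1 V‖ * s ≤ NV := by simpa using hcV 1
  have hNVpos : (0:ℝ) < NV :=
    lt_of_lt_of_le (mul_pos (norm_pos_iff.mpr hV1) hs) hv1s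
  -- Step 1 : z₁ ≠ 0
  have hz1 : coeff 1 z ≠ 0 := by
    by_contra hz1
    have hex : ∃ n, coeff n z ≠ 0 := by
      by_contra h; push_neg at h
      exact hz (PowerSeries.ext fun n => by simp [h n])
    set m := Nat.find hex with hmdef
    have hmne : coeff m z ≠ 0 := Nat.find_spec hex
    have hmlt : ∀ j < m, coeff j z = 0 := fun j hj => not_ne_iff.mp (Nat.find_min hex hj)
    have hm0 : m ≠ 0 := fun h => hmne (h ▸ hz0')
    have hm1 : m ≠ 1 := fun h => hmne (h ▸ hz1)
    have hm2 : 2 ≤ m := by omega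
    have hD : ∀ a, a + 1 < m → coeff a (d⁄dX K z) = 0 := fun a ha => by
      rw [coeff_derivative, hmlt _ ha, zero_mul]
    have hD2 : ∀ j, j < 2 * m - 2 → coeff j ((d⁄dX K z) ^ 2) = 0 := by
      intro j hj
      rw [sq, coeff_mul]
      refine Finset.sum_eq_zero fun p hp => ?_
      rw [Finset.HasAntidiagonal.mem_antidiagonal] at hp
      rcases lt_or_ge (p.1 + 1) m with h | h
      · rw [hD _ h, zero_mul]
      · rw [hD p.2 (by omega), mul_zero]
    have hL : coeff m (U * (d⁄dX K z) ^ 2) = 0 := by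
      rw [coeff_mul]
      refine Finset.sum_eq_zero fun p hp => ?_
      rw [Finset.HasAntidiagonal.mem_antidiagonal] at hp
      rcases Nat.eq_zero_or_pos p.1 with h | h
      · rw [h, coeff_zero_eq_constantCoeff, hU0, zero_mul]
      · rw [hD2 p.2 (by omega), mul_zero]
    have hXz : (X : PowerSeries K) ^ m ∣ z := X_pow_dvd_iff.mpr hmlt
    have hR : coeff m (V.compSeries z) = coeff 1 V * coeff m z := by
      rw [PowerSeries.compSeries, coeff_mk]
      rw [Finset.sum_eq_single 1]
      · rw [pow_one]
      · intro k hk hk1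
        rcases Nat.eq_zero_or_pos k with h | h
        · rw [h, coeff_zero_eq_constantCoeff, hV0, zero_mul]
        · have hk2 : 2 ≤ k := by omega
          have hdvd : (X : PowerSeries K) ^ (m * k) ∣ z ^ k := by
            rw [pow_mul]; exact pow_dvd_pow_of_dvd hXz k
          have : coeff m (z ^ k) = 0 := by
            refine X_pow_dvd_iff.mp hdvd m ?_
            calc m < m * 2 := by omega
              _ ≤ m * k := Nat.mul_le_mul_left m hk2
          rw [this, mul_zero]
      · intro h
        exact absurd (Finset.mem_range.mpr (by omega)) h
    rw [hsol, hR] at hL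
    exact hV1 (by
      rcases mul_eq_zero.mp (hL.symm ▸ rfl : coeff 1 V * coeff m z = 0) with h | h
      · exact h
      · exact absurd h hmne)
  have hz1pos : (0:ℝ) < ‖coeff 1 z‖ := norm_pos_iff.mpr hz1
  -- Step 2 : v₁ = u₁ z₁
  have hv1 : coeff 1 V = coeff 1 U * coeff 1 z := by
    have heq := congrArg (coeff 1) hsol
    have hA : (Finset.HasAntidiagonal.antidiagonal 1 : Finset (ℕ × ℕ)) = {(0, 1), (1, 0)} := rfl
    rw [coeff_mul, hA] at heq
    rw [PowerSeries.compSeries, coeff_mk] at heq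
    simp [Finset.sum_range_succ, coeff_zero_eq_constantCoeff, hU0, hV0] at heq
    have hc0 : constantCoeff (d⁄dX K z) = coeff 1 z := by
      rw [← coeff_zero_eq_constantCoeff, coeff_derivative]; simp
    rw [hc0] at heq
    have := mul_right_cancel₀ hz1
      (by linear_combination heq :
        coeff 1 U * coeff 1 z * coeff 1 z = coeff 1 V * coeff 1 z)
    exact this.symm
  -- the growth rate M
  set M : ℝ := max (NV / (s ^ 2 * ‖coeff 1 U‖)) (NU / (r ^ 2 * ‖coeff 1 U‖)) with hMdef
  have hM0 : (0:ℝ) < M :=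
    lt_of_lt_of_le (by positivity : (0:ℝ) < NU / (r ^ 2 * ‖coeff 1 U‖)) (le_max_right _ _)
  have hMV : NV ≤ M * (s ^ 2 * ‖coeff 1 U‖) :=
    (div_le_iff₀ (by positivity)).mp (le_max_left _ _)
  have hMU : NU ≤ M * (r ^ 2 * ‖coeff 1 U‖) :=
    (div_le_iff₀ (by positivity)).mp (le_max_right _ _)
  have hz1M : ‖coeff 1 z‖ ≤ s * M := by
    have h1 : ‖coeff 1 U‖ * ‖coeff 1 z‖ * s ≤ NV := by
      have := hv1s; rw [hv1, norm_mul] at this; simpa using this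
    have h3 : ‖coeff 1 z‖ * (s * ‖coeff 1 U‖) ≤ (s * M) * (s * ‖coeff 1 U‖) := by
      nlinarith
    exact le_of_mul_le_mul_right h3 (by positivity)
  have hMr1 : (1:ℝ) ≤ M * r := by nlinarith [hu1r, hMU, mul_pos hr hu1pos]
  have hMA : ∀ i : ℕ, NU ≤ ‖coeff 1 U‖ * M ^ (i + 1) * r ^ (i + 2) := by
    intro i
    induction i with
    | zero =>
      calc NU ≤ M * (r ^ 2 * ‖coeff 1 U‖) := hMU
        _ = ‖coeff 1 U‖ * M ^ (0 + 1) * r ^ (0 + 2) := by ring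
    | succ i ih =>
      calc NU = NU * 1 := (mul_one _).symm
        _ ≤ NU * (M * r) := mul_le_mul_of_nonneg_left hMr1 hNUpos.le
        _ ≤ (‖coeff 1 U‖ * M ^ (i + 1) * r ^ (i + 2)) * (M * r) :=
            mul_le_mul_of_nonneg_right ih (by positivity)
        _ = ‖coeff 1 U‖ * M ^ (i + 1 + 1) * r ^ (i + 1 + 2) := by ring
  have hMB : ∀ k : ℕ, NV * ‖coeff 1 z‖ ^ k ≤ ‖coeff 1 U‖ * M ^ (k + 1) * s ^ (k + 2) := by
    intro k
    induction k with
    | zero =>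
      calc NV * ‖coeff 1 z‖ ^ 0 = NV := by ring
        _ ≤ M * (s ^ 2 * ‖coeff 1 U‖) := hMV
        _ = ‖coeff 1 U‖ * M ^ (0 + 1) * s ^ (0 + 2) := by ring
    | succ k ih =>
      calc NV * ‖coeff 1 z‖ ^ (k + 1)
          = (NV * ‖coeff 1 z‖ ^ k) * ‖coeff 1 z‖ := by ring
        _ ≤ (‖coeff 1 U‖ * M ^ (k + 1) * s ^ (k + 2)) * (s * M) :=
            mul_le_mul ih hz1M (norm_nonneg _) (by positivity)
        _ = ‖coeff 1 U‖ * M ^ (k + 1 + 1) * s ^ (k + 1 + 2) := by ring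
  -- main induction
  have key : ∀ N : ℕ, ‖coeff N z‖ ≤ ‖coeff 1 z‖ * M ^ (N - 1) := by
    intro N
    induction N using Nat.strong_induction_on with
    | _ N ih =>
      match N, ih with
      | 0, _ => rw [hz0']; simpa using (by positivity : (0:ℝ) ≤ ‖coeff 1 z‖ * M ^ (0 - 1))
      | 1, _ => simp
      | (n+2), ih =>
        have Hlt : ∀ j < n + 2, ‖coeff j z‖ ≤ ‖coeff 1 z‖ * M ^ (j - 1) :=
          fun j hj => ih j hj
        set T : ℝ := ‖coeff 1 U‖ * ‖coeff 1 z‖ * (‖coeff 1 z‖ * M ^ (n + 1)) with hTdef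
        have hT0 : (0:ℝ) ≤ T := by positivity
        -- split the LHS coefficient
        have hmem1 : ((1 : ℕ), n + 1) ∈ Finset.HasAntidiagonal.antidiagonal (n + 2) :=
          Finset.HasAntidiagonal.mem_antidiagonal.mpr (by omega)
        have hLsplit : coeff (n+2) (U * (d⁄dX K z) ^ 2)
            = coeff 1 U * coeff (n+1) ((d⁄dX K z) ^ 2)
              + ∑ p ∈ (Finset.HasAntidiagonal.antidiagonal (n+2)).erase (1, n+1),
                  coeff p.1 U * coeff p.2 ((d⁄dX K z) ^ 2) := by
          rw [coeff_mul]; exact (Finset.add_sum_erase _ _ hmem1).symm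
        have hmemR : (1 : ℕ) ∈ Finset.range (n + 3) := by simp
        have hRsplit : coeff (n+2) (V.compSeries z)
            = coeff 1 V * coeff (n+2) (z ^ 1)
              + ∑ k ∈ (Finset.range (n+3)).erase 1, coeff k V * coeff (n+2) (z ^ k) := by
          rw [PowerSeries.compSeries, coeff_mk]
          exact (Finset.add_sum_erase _ _ hmemR).symm
        have hmemq0 : ((0:ℕ), n+1) ∈ Finset.HasAntidiagonal.antidiagonal (n+1) :=
          Finset.HasAntidiagonal.mem_antidiagonal.mpr (by omega)
        have hmemq1 : ((n+1 : ℕ), 0) ∈ (Finset.HasAntidiagonal.antidiagonal (n+1)).erase (0, n+1) :=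
          Finset.mem_erase.mpr ⟨by simp, Finset.HasAntidiagonal.mem_antidiagonal.mpr (by omega)⟩
        have hD2split : coeff (n+1) ((d⁄dX K z) ^ 2)
            = coeff 0 (d⁄dX K z) * coeff (n+1) (d⁄dX K z)
              + (coeff (n+1) (d⁄dX K z) * coeff 0 (d⁄dX K z)
                + ∑ q ∈ ((Finset.HasAntidiagonal.antidiagonal (n+1)).erase (0, n+1)).erase (n+1, 0),
                    coeff q.1 (d⁄dX K z) * coeff q.2 (d⁄dX K z)) := by
          rw [sq, coeff_mul, ← Finset.add_sum_erase _ _ hmemq0, ← Finset.add_sum_erase _ _ hmemq1]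
        have e0 : coeff 0 (d⁄dX K z) = coeff 1 z := by
          rw [coeff_derivative]; simp
        have e1 : coeff (n+1) (d⁄dX K z) = coeff (n+2) z * (((n+2 : ℕ)) : K) := by
          rw [coeff_derivative]; norm_cast
        have heq := congrArg (coeff (n+2)) hsol
        rw [hLsplit, hRsplit, hD2split, e0, e1, pow_one] at heq
        -- the exact identity isolating coeff (n+2) z
        have hiden : coeff 1 U * coeff 1 z * coeff (n+2) z
              * (2 * (((n+2 : ℕ)) : K) - 1)
            = (∑ k ∈ (Finset.range (n+3)).erase 1, coeff k V * coeff (n+2) (z ^ k))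
              - (∑ p ∈ (Finset.HasAntidiagonal.antidiagonal (n+2)).erase (1, n+1),
                  coeff p.1 U * coeff p.2 ((d⁄dX K z) ^ 2))
              - coeff 1 U *
                (∑ q ∈ ((Finset.HasAntidiagonal.antidiagonal (n+1)).erase (0, n+1)).erase (n+1, 0),
                    coeff q.1 (d⁄dX K z) * coeff q.2 (d⁄dX K z)) := by
          linear_combination heq + coeff (n+2) z * hv1
        -- bounds on the three sums
        have hRRb : ‖∑ k ∈ (Finset.range (n+3)).erase 1,
            coeff k V * coeff (n+2) (z ^ k)‖ ≤ T := by
          refine na_sum_le hna _ _ hT0 fun k hk => ?_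
          obtain ⟨hk1, hkr⟩ := Finset.mem_erase.mp hk
          rw [Finset.mem_range] at hkr
          rcases Nat.eq_zero_or_pos k with h | h
          · rw [h, coeff_zero_eq_constantCoeff, hV0, zero_mul, norm_zero]; exact hT0
          · have hk2 : 2 ≤ k := by omega
            have hp := pow_coeff_bound hna z hz0 M hM0.le (n+2) Hlt (k-1) (n+2) (by omega)
            have ek : k - 1 + 1 = k := by omega
            rw [ek] at hp
            have hvk := hcV k
            have hmb := hMB (k-2)
            have e2 : k - 2 + 1 = k - 1 := by omega
            have e3 : k - 2 + 2 = k := by omega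
            rw [e2, e3] at hmb
            have hsk : (0:ℝ) < s ^ k := by positivity
            rw [norm_mul, ← mul_le_mul_iff_left₀ hsk]
            have ez : ‖coeff 1 z‖ ^ k = ‖coeff 1 z‖ ^ (k-2) * ‖coeff 1 z‖ ^ 2 := by
              rw [← pow_add]; congr 1; omega
            calc ‖coeff k V‖ * ‖coeff (n+2) (z ^ k)‖ * s ^ k
                ≤ ‖coeff k V‖ * (‖coeff 1 z‖ ^ k * M ^ (n + 2 - k)) * s ^ k := by
                  have := mul_le_mul_of_nonneg_left hp (norm_nonneg (coeff k V))
                  exact mul_le_mul_of_nonneg_right this hsk.le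
              _ = (‖coeff k V‖ * s ^ k) *
                    (‖coeff 1 z‖ ^ (k-2) * (‖coeff 1 z‖ ^ 2 * M ^ (n + 2 - k))) := by
                  rw [ez]; ring
              _ ≤ NV * (‖coeff 1 z‖ ^ (k-2) * (‖coeff 1 z‖ ^ 2 * M ^ (n + 2 - k))) :=
                  mul_le_mul_of_nonneg_right hvk (by positivity)
              _ = (NV * ‖coeff 1 z‖ ^ (k-2)) * (‖coeff 1 z‖ ^ 2 * M ^ (n + 2 - k)) := by
                  ring
              _ ≤ (‖coeff 1 U‖ * M ^ (k-1) * s ^ k) *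
                    (‖coeff 1 z‖ ^ 2 * M ^ (n + 2 - k)) :=
                  mul_le_mul_of_nonneg_right hmb (by positivity)
              _ = ‖coeff 1 U‖ * ‖coeff 1 z‖ ^ 2 * (M ^ (k-1) * M ^ (n + 2 - k)) * s ^ k := by
                  ring
              _ = T * s ^ k := by
                  rw [← pow_add, show k - 1 + (n + 2 - k) = n + 1 by omega, hTdef]; ring
        have hS1b : ‖∑ p ∈ (Finset.HasAntidiagonal.antidiagonal (n+2)).erase (1, n+1),
            coeff p.1 U * coeff p.2 ((d⁄dX K z) ^ 2)‖ ≤ T := by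
          refine na_sum_le hna _ _ hT0 fun p hp => ?_
          obtain ⟨a, b⟩ := p
          obtain ⟨hpne, hpmem⟩ := Finset.mem_erase.mp hp
          rw [Finset.HasAntidiagonal.mem_antidiagonal] at hpmem
          simp only at hpmem hpne ⊢
          rcases Nat.eq_zero_or_pos a with h | h
          · rw [h, coeff_zero_eq_constantCoeff, hU0, zero_mul, norm_zero]; exact hT0
          · have ha1 : a ≠ 1 := by
              intro h1
              exact hpne (by simp [Prod.ext_iff, h1]; omega)
            have ha2 : 2 ≤ a := by omega
            have hd2 := dsq_coeff_bound hna z M hM0.le (n+2) Hlt b (by omega)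
            have hma := hMA (a-2)
            have ea1 : a - 2 + 1 = a - 1 := by omega
            have ea2 : a - 2 + 2 = a := by omega
            rw [ea1, ea2] at hma
            have hub : ‖coeff a U‖ ≤ ‖coeff 1 U‖ * M ^ (a-1) := by
              have hra : (0:ℝ) < r ^ a := by positivity
              have h1 : ‖coeff a U‖ * r ^ a ≤ (‖coeff 1 U‖ * M ^ (a-1)) * r ^ a := by
                calc ‖coeff a U‖ * r ^ a ≤ NU := hcU a
                  _ ≤ ‖coeff 1 U‖ * M ^ (a-1) * r ^ a := hma
              exact le_of_mul_le_mul_right h1 hra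
            rw [norm_mul]
            calc ‖coeff a U‖ * ‖coeff b ((d⁄dX K z) ^ 2)‖
                ≤ (‖coeff 1 U‖ * M ^ (a-1)) * (‖coeff 1 z‖ ^ 2 * M ^ b) :=
                  mul_le_mul hub hd2 (norm_nonneg _) (by positivity)
              _ = ‖coeff 1 U‖ * ‖coeff 1 z‖ ^ 2 * (M ^ (a-1) * M ^ b) := by ring
              _ = T := by
                  rw [← pow_add, show a - 1 + b = n + 1 by omega, hTdef]; ring
        have hR2b : ‖coeff 1 U * ∑ q ∈ ((Finset.HasAntidiagonal.antidiagonal (n+1)).erase (0, n+1)).erase (n+1, 0),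
            coeff q.1 (d⁄dX K z) * coeff q.2 (d⁄dX K z)‖ ≤ T := by
          rw [norm_mul, hTdef]
          rw [mul_assoc (‖coeff 1 U‖)]
          refine mul_le_mul_of_nonneg_left ?_ (norm_nonneg _)
          refine na_sum_le hna _ _ (by positivity) fun q hq => ?_
          obtain ⟨a, b⟩ := q
          obtain ⟨hne1, hq'⟩ := Finset.mem_erase.mp hq
          obtain ⟨hne0, hqmem⟩ := Finset.mem_erase.mp hq'
          rw [Finset.HasAntidiagonal.mem_antidiagonal] at hqmem
          simp only at hqmem hne0 hne1 ⊢
          have ha : 1 ≤ a := by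
            rcases Nat.eq_zero_or_pos a with h | h
            · exact absurd (by simp [Prod.ext_iff, h]; omega) hne0
            · exact h
          have hb : 1 ≤ b := by
            rcases Nat.eq_zero_or_pos b with h | h
            · exact absurd (by simp [Prod.ext_iff, h]; omega) hne1
            · exact h
          rw [coeff_derivative, coeff_derivative, norm_mul, norm_mul, norm_mul]
          have hn1 : ‖((a : K) + 1)‖ ≤ 1 := by
            have := na_natCast_le_one hna (a + 1); push_cast at this; exact this
          have hn2 : ‖((b : K) + 1)‖ ≤ 1 := by
            have := na_natCast_le_one hna (b + 1); push_cast at this; exact this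
          have h1 : ‖coeff (a + 1) z‖ ≤ ‖coeff 1 z‖ * M ^ a := by
            have := Hlt (a + 1) (by omega); simpa using this
          have h2' : ‖coeff (b + 1) z‖ ≤ ‖coeff 1 z‖ * M ^ b := by
            have := Hlt (b + 1) (by omega); simpa using this
          calc ‖coeff (a+1) z‖ * ‖((a:K)+1)‖ * (‖coeff (b+1) z‖ * ‖((b:K)+1)‖)
              ≤ (‖coeff 1 z‖ * M ^ a * 1) * (‖coeff 1 z‖ * M ^ b * 1) := by
                refine mul_le_mul ?_ ?_ (by positivity) (by positivity)
                · exact mul_le_mul h1 hn1 (norm_nonneg _) (by positivity)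
                · exact mul_le_mul h2' hn2 (norm_nonneg _) (by positivity)
            _ = ‖coeff 1 z‖ * (‖coeff 1 z‖ * (M ^ a * M ^ b)) := by ring
            _ = ‖coeff 1 z‖ * (‖coeff 1 z‖ * M ^ (n+1)) := by
                rw [← pow_add, show a + b = n + 1 from hqmem]
        -- the two-adic norm of 2(n+2) - 1 is ≥ 1
        have h2κ : (1:ℝ) ≤ ‖2 * (((n+2 : ℕ)) : K) - 1‖ := by
          have hsmall : ‖(2:K) * (((n+2 : ℕ)) : K)‖ < 1 := by
            rw [norm_mul, h2]
            have := na_natCast_le_one hna (n+2)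
            linarith
          have htri := hna ((2:K) * (((n+2 : ℕ)) : K)) (1 - 2 * (((n+2 : ℕ)) : K))
          rw [show (2:K) * (((n+2 : ℕ)) : K) + (1 - 2 * (((n+2 : ℕ)) : K)) = 1 by ring,
            norm_one] at htri
          rcases le_max_iff.mp htri with h | h
          · linarith
          · rwa [norm_sub_rev] at h
        -- put everything together
        have nsub : ∀ x y : K, ‖x - y‖ ≤ max ‖x‖ ‖y‖ := fun x y => by
          simpa [sub_eq_add_neg] using hna x (-y)
        have hfinal : ‖coeff 1 U‖ * ‖coeff 1 z‖ * ‖coeff (n+2) z‖ ≤ T := by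
          calc ‖coeff 1 U‖ * ‖coeff 1 z‖ * ‖coeff (n+2) z‖
              = ‖coeff 1 U * coeff 1 z * coeff (n+2) z‖ := by
                rw [norm_mul, norm_mul]
            _ ≤ ‖coeff 1 U * coeff 1 z * coeff (n+2) z‖
                  * ‖2 * (((n+2 : ℕ)) : K) - 1‖ :=
                le_mul_of_one_le_right (norm_nonneg _) h2κ
            _ = ‖coeff 1 U * coeff 1 z * coeff (n+2) z
                  * (2 * (((n+2 : ℕ)) : K) - 1)‖ := (norm_mul _ _).symm
            _ ≤ T := by
                rw [hiden]
                exact le_trans (nsub _ _)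
                  (max_le (le_trans (nsub _ _) (max_le hRRb hS1b)) hR2b)
        have hfin2 : ‖coeff (n+2) z‖ ≤ ‖coeff 1 z‖ * M ^ (n+1) := by
          have hpos : (0:ℝ) < ‖coeff 1 U‖ * ‖coeff 1 z‖ := mul_pos hu1pos hz1pos
          refine le_of_mul_le_mul_left ?_ hpos
          calc ‖coeff 1 U‖ * ‖coeff 1 z‖ * ‖coeff (n+2) z‖
              ≤ T := hfinal
            _ = ‖coeff 1 U‖ * ‖coeff 1 z‖ * (‖coeff 1 z‖ * M ^ (n+1)) := hTdef
        exact hfin2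
  -- conclude from the coefficient bounds
  have hρmin1 : ρ < r * s ^ 2 * ‖coeff 1 U‖ ^ 2 / (NU * NV) :=
    lt_of_lt_of_le hρm (min_le_left _ _)
  have hρmin2 : ρ < r ^ 2 * ‖coeff 1 U‖ / NU := lt_of_lt_of_le hρm (min_le_right _ _)
  have hk1 : ρ * (NU * NV) < r * s ^ 2 * ‖coeff 1 U‖ ^ 2 :=
    (lt_div_iff₀ (by positivity)).mp hρmin1
  have hk2 : ρ * NU < r ^ 2 * ‖coeff 1 U‖ := (lt_div_iff₀ hNUpos).mp hρmin2
  have hMρ : M * ρ ≤ 1 := by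
    rcases max_cases (NV / (s ^ 2 * ‖coeff 1 U‖)) (NU / (r ^ 2 * ‖coeff 1 U‖)) with
      ⟨hMeq, _⟩ | ⟨hMeq, _⟩
    · rw [hMdef, hMeq, div_mul_eq_mul_div, div_le_one (by positivity)]
      nlinarith [hk1, hNUpos, hNVpos, hρ,
        mul_le_mul_of_nonneg_right hu1r
          (le_of_lt (by positivity : (0:ℝ) < s ^ 2 * ‖coeff 1 U‖))]
    · rw [hMdef, hMeq, div_mul_eq_mul_div, div_le_one (by positivity)]
      nlinarith [hk2]
  refine ⟨‖coeff 1 z‖ * ρ, fun n => ?_⟩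
  rcases n with _ | m
  · rw [hz0']
    simp only [norm_zero, zero_mul]
    positivity
  · have hkey := key (m + 1)
    simp only [Nat.add_sub_cancel] at hkey
    calc ‖coeff (m+1) z‖ * ρ ^ (m+1)
        ≤ (‖coeff 1 z‖ * M ^ m) * ρ ^ (m+1) :=
          mul_le_mul_of_nonneg_right hkey (by positivity)
      _ = (‖coeff 1 z‖ * ρ) * (M * ρ) ^ m := by rw [mul_pow]; ring
      _ ≤ (‖coeff 1 z‖ * ρ) * 1 :=
          mul_le_mul_of_nonneg_left (pow_le_one₀ (by positivity) hMρ) (by positivity)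
      _ = ‖coeff 1 z‖ * ρ := mul_one _
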